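/- (Proposition 2.2, part 3.) Let s ∈ ℝ with s > 1, and let z ∈ ℍ satisfy im z < 1 and im(δ·z) ≤ 1 for every δ ∈ Γ. Assume there exists U > 0 such that for every t ≥ 0 the set A(z,t) is finite with Π(z,t) ≤ U·e^t. Then s · ∫₀^∞ e^{−s t} · Π(z,t) dt ≤ E(z,s) ≤ s · ∫₀^∞ e^{−s t} · Π(z,t+1) dt, where the integrals are Lebesgue integrals over [0,∞). -/

import Mathlib

open scoped UpperHalfPlane MatrixGroups ENNReal NNReal
open UpperHalfPlane MeasureTheory Set

noncomputable section

/-- The parabolic element `T = [[1,1],[0,1]]` of `SL(2,ℝ)`, acting on `ℍ` by `z ↦ z + 1`. -/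
def T : SL(2, ℝ) := ⟨!![1, 1; 0, 1], by norm_num [Matrix.det_fin_two_of]⟩

/-- The horocycle segment `h ⊆ ℍ`: points with `-1/2 ≤ re < 1/2` and `im = 1`. -/
def horocycle : Set ℍ := {w : ℍ | -(1 / 2) ≤ w.re ∧ w.re < 1 / 2 ∧ w.im = 1}

variable (Γ : Subgroup SL(2, ℝ))

/-- The cyclic subgroup `Γ∞` of `Γ` generated by `T`. -/
abbrev GammaInf (hT : T ∈ Γ) : Subgroup Γ := Subgroup.zpowers ⟨T, hT⟩

/-- The set of right cosets `Γ∞\Γ`. -/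
abbrev Cosets (hT : T ∈ Γ) := Quotient (QuotientGroup.rightRel (GammaInf Γ hT))

variable (hT : T ∈ Γ)

/-- The term `(im (δ·z))^s` of the Eisenstein series attached to a coset `q ∈ Γ∞\Γ`
(`δ` a representative of `q`; the value is independent of the representative). -/
def eisTerm (z : ℍ) (s : ℝ) (q : Cosets Γ hT) : ℝ :=
  (((Quotient.out q : Γ) : SL(2, ℝ)) • z).im ^ s

/-- The Eisenstein series `E(z,s) = ∑'_{q ∈ Γ∞\Γ} (im (δ·z))^s`. -/
def Eis (z : ℍ) (s : ℝ) : ℝ := ∑' q : Cosets Γ hT, eisTerm Γ hT z s q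

/-- `A(z,t)`: the set of cosets `q ∈ Γ∞\Γ` admitting a representative `δ` with
`dist(i, δ·z) ≤ t`. -/
def Aset (z : ℍ) (t : ℝ) : Set (Cosets Γ hT) :=
  {q | ∃ δ : Γ, Quotient.mk (QuotientGroup.rightRel (GammaInf Γ hT)) δ = q ∧
    dist UpperHalfPlane.I ((δ : SL(2, ℝ)) • z) ≤ t}

/-- `A(h,z,t)`: the set of cosets `q ∈ Γ∞\Γ` admitting a representative `δ` with
`-1/2 ≤ re(δ·z) < 1/2` and `infDist (δ·z) h ≤ t`. -/
def Ahset (z : ℍ) (t : ℝ) : Set (Cosets Γ hT) :=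
  {q | ∃ δ : Γ, Quotient.mk (QuotientGroup.rightRel (GammaInf Γ hT)) δ = q ∧
    -(1 / 2) ≤ ((δ : SL(2, ℝ)) • z).re ∧ ((δ : SL(2, ℝ)) • z).re < 1 / 2 ∧
    Metric.infDist ((δ : SL(2, ℝ)) • z) horocycle ≤ t}

/-! ### Auxiliary lemmas -/

lemma integral_exp_neg_mul_Ioi' {s : ℝ} (hs : 0 < s) (a : ℝ) :
    ∫ t in Set.Ioi a, Real.exp (-s * t) = Real.exp (-s * a) / s := by
  have h := MeasureTheory.integral_Ioi_of_hasDerivAt_of_tendsto'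
    (f := fun t => -Real.exp (-s * t) / s) (f' := fun t => Real.exp (-s * t)) (a := a) (m := 0)
    ?_ ?_ ?_
  · rw [h]; ring
  · intro x _
    have hd : HasDerivAt (fun t : ℝ => -s * t) (-s) x := by
      simpa using (hasDerivAt_id x).const_mul (-s)
    have h2 := (hd.exp).neg.div_const s
    convert h2 using 1
    · rfl
    · rfl
    · field_simp
  · simpa using exp_neg_integrableOn_Ioi a hs
  · rw [show (0:ℝ) = -0/s by simp]
    apply Filter.Tendsto.div_const
    apply Filter.Tendsto.neg
    exact Real.tendsto_exp_atBot.comp (Filter.tendsto_id.const_mul_atTop_of_neg (by linarith))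

lemma lintegral_exp_indicator' {s : ℝ} (hs : 0 < s) {a : ℝ} (ha : 0 ≤ a) :
    ∫⁻ t in Ioi (0:ℝ), (ENNReal.ofReal (Real.exp (-s*t)) * (if a ≤ t then 1 else 0))
      = ENNReal.ofReal (Real.exp (-s * a) / s) := by
  have h1 : ∀ t : ℝ, ENNReal.ofReal (Real.exp (-s*t)) * (if a ≤ t then 1 else 0)
      = (Ici a).indicator (fun t => ENNReal.ofReal (Real.exp (-s*t))) t := by
    intro t
    by_cases h : a ≤ t <;> simp [Set.indicator_apply, Set.mem_Ici, h]
  simp_rw [h1]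
  rw [lintegral_indicator measurableSet_Ici, Measure.restrict_restrict measurableSet_Ici]
  have hset : Measure.restrict volume (Ici a ∩ Ioi 0) = Measure.restrict volume (Ioi a) := by
    apply Measure.restrict_congr_set
    have hae : ∀ᵐ x : ℝ, x ≠ a := by
      rw [ae_iff]
      simpa using Real.volume_singleton
    rw [Filter.eventuallyEq_set]
    filter_upwards [hae] with x hx
    simp only [mem_inter_iff, mem_Ici, mem_Ioi]
    constructor
    · rintro ⟨h1, h2⟩; exact lt_of_le_of_ne h1 (Ne.symm hx)
    · intro h; exact ⟨h.le, lt_of_le_of_lt ha h⟩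
  rw [hset]
  rw [← ofReal_integral_eq_lintegral_ofReal]
  · rw [integral_exp_neg_mul_Ioi' hs]
  · simpa [IntegrableOn] using exp_neg_integrableOn_Ioi a hs
  · filter_upwards with t using (Real.exp_pos _).le

/-- The key layer-cake identity. -/
lemma key_identity' {α : Type*} [Countable α] {s : ℝ} (hs : 0 < s) (r : α → ℝ)
    (hr : ∀ q, 0 ≤ r q) (hfin : ∀ t : ℝ, {q : α | r q ≤ t}.Finite) :
    ENNReal.ofReal s * (∫⁻ t in Ioi (0:ℝ),
        ENNReal.ofReal (Real.exp (-s*t)) * ({q : α | r q ≤ t}.ncard : ℝ≥0∞))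
      = ∑' q : α, ENNReal.ofReal (Real.exp (-s * r q)) := by
  have hpt : ∀ t : ℝ, ENNReal.ofReal (Real.exp (-s*t)) * ({q : α | r q ≤ t}.ncard : ℝ≥0∞)
      = ∑' q : α, (ENNReal.ofReal (Real.exp (-s*t)) * (if r q ≤ t then 1 else 0)) := by
    intro t
    rw [ENNReal.tsum_mul_left]
    congr 1
    have h0 : ∀ q ∉ (hfin t).toFinset, (if r q ≤ t then (1:ℝ≥0∞) else 0) = 0 := by
      intro q hq
      simp only [Set.Finite.mem_toFinset, mem_setOf_eq] at hq
      simp [hq]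
    rw [tsum_eq_sum h0]
    rw [Finset.sum_congr rfl (fun q hq => ?_), Finset.sum_const, nsmul_eq_mul, mul_one,
      Set.ncard_eq_toFinset_card _ (hfin t)]
    · simp only [Set.Finite.mem_toFinset, mem_setOf_eq] at hq
      simp [hq]
  have hmeas : ∀ q : α, Measurable (fun t : ℝ =>
      ENNReal.ofReal (Real.exp (-s*t)) * (if r q ≤ t then 1 else 0)) := by
    intro q
    apply Measurable.mul
    · exact (Real.continuous_exp.comp (continuous_const.mul continuous_id)).measurable.ennreal_ofReal
    · exact Measurable.ite measurableSet_Ici measurable_const measurable_const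
  calc ENNReal.ofReal s * (∫⁻ t in Ioi (0:ℝ),
        ENNReal.ofReal (Real.exp (-s*t)) * ({q : α | r q ≤ t}.ncard : ℝ≥0∞))
      = ENNReal.ofReal s * ∫⁻ t in Ioi (0:ℝ), ∑' q : α,
          (ENNReal.ofReal (Real.exp (-s*t)) * (if r q ≤ t then 1 else 0)) := by
        congr 1
        exact lintegral_congr fun t => hpt t
    _ = ENNReal.ofReal s * ∑' q : α, ∫⁻ t in Ioi (0:ℝ),
          (ENNReal.ofReal (Real.exp (-s*t)) * (if r q ≤ t then 1 else 0)) := by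
        rw [lintegral_tsum (fun q => (hmeas q).aemeasurable)]
    _ = ∑' q : α, ENNReal.ofReal s * ENNReal.ofReal (Real.exp (-s * r q) / s) := by
        rw [ENNReal.tsum_mul_left]
        congr 1
        exact tsum_congr fun q => lintegral_exp_indicator' hs (hr q)
    _ = ∑' q : α, ENNReal.ofReal (Real.exp (-s * r q)) := by
        refine tsum_congr fun q => ?_
        rw [← ENNReal.ofReal_mul hs.le, mul_div_cancel₀ _ hs.ne']

lemma T_smul' (w : ℍ) : T • w = (1 : ℝ) +ᵥ w := by
  rw [UpperHalfPlane.ext_iff, UpperHalfPlane.coe_vadd, UpperHalfPlane.specialLinearGroup_apply,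
    UpperHalfPlane.coe_mk]
  simp [T, UpperHalfPlane.coe_vadd]
  ring

lemma T_inv_smul' (w : ℍ) : T⁻¹ • w = (-1 : ℝ) +ᵥ w := by
  rw [inv_smul_eq_iff, T_smul', vadd_vadd]
  norm_num

lemma T_zpow_smul' (n : ℤ) (w : ℍ) : (T ^ n) • w = (n : ℝ) +ᵥ w := by
  induction n using Int.induction_on generalizing w with
  | zero => simp
  | succ k ih =>
      rw [zpow_add_one, mul_smul, T_smul', ih, vadd_vadd]
      congr 1; push_cast; ring
  | pred k ih =>
      rw [zpow_sub_one, mul_smul, T_inv_smul', ih, vadd_vadd]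
      congr 1; push_cast; ring

lemma neg_log_le_dist' (w : ℍ) : -Real.log w.im ≤ dist UpperHalfPlane.I w := by
  have h := UpperHalfPlane.dist_log_im_le UpperHalfPlane.I w
  rw [UpperHalfPlane.I_im, Real.log_one, Real.dist_eq] at h
  calc -Real.log w.im ≤ |(-Real.log w.im)| := le_abs_self _
    _ = |0 - Real.log w.im| := by rw [zero_sub, abs_neg]
    _ ≤ dist UpperHalfPlane.I w := h

lemma dist_le_one_add_neg_log' (w : ℍ) (hre : |w.re| ≤ 1/2) (him : w.im ≤ 1) :
    dist UpperHalfPlane.I w ≤ 1 + -Real.log w.im := by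
  set p : ℍ := w.re +ᵥ UpperHalfPlane.I with hp
  have hpim : p.im = 1 := by rw [hp, UpperHalfPlane.vadd_im, UpperHalfPlane.I_im]
  have hpre : p.re = w.re := by rw [hp, UpperHalfPlane.vadd_re, UpperHalfPlane.I_re, add_zero]
  have h1 : dist UpperHalfPlane.I p ≤ 1 := by
    rw [UpperHalfPlane.dist_eq]
    have hd : dist (UpperHalfPlane.I : ℂ) (p : ℂ) = |w.re| := by
      rw [hp, UpperHalfPlane.coe_vadd, UpperHalfPlane.coe_I, Complex.dist_eq]
      simp
    rw [hd, UpperHalfPlane.I_im, hpim, one_mul, Real.sqrt_one, mul_one]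
    have harsinh : Real.arsinh (|w.re| / 2) ≤ |w.re| / 2 := by
      calc Real.arsinh (|w.re| / 2) ≤ Real.arsinh (Real.sinh (|w.re| / 2)) := by
            apply Real.arsinh_le_arsinh.mpr
            exact Real.self_le_sinh_iff.mpr (by positivity)
        _ = |w.re| / 2 := Real.arsinh_sinh _
    calc 2 * Real.arsinh (|w.re| / 2) ≤ 2 * (|w.re| / 2) := by linarith
      _ = |w.re| := by ring
      _ ≤ 1 := by linarith [hre]
  have h2 : dist p w = -Real.log w.im := by
    rw [UpperHalfPlane.dist_of_re_eq hpre, hpim, Real.log_one, Real.dist_eq, zero_sub, abs_neg,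
      abs_of_nonpos (Real.log_nonpos w.im_pos.le him)]
  calc dist UpperHalfPlane.I w ≤ dist UpperHalfPlane.I p + dist p w := dist_triangle _ _ _
    _ ≤ 1 + -Real.log w.im := by rw [h2]; linarith

lemma smul_eq_vadd_of_mk_eq' {δ δ' : Γ}
    (h : Quotient.mk (QuotientGroup.rightRel (GammaInf Γ hT)) δ =
      Quotient.mk (QuotientGroup.rightRel (GammaInf Γ hT)) δ') (z : ℍ) :
    ∃ n : ℤ, ((δ' : SL(2,ℝ))) • z = (n : ℝ) +ᵥ (((δ : SL(2,ℝ))) • z) := by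
  rw [Quotient.eq] at h
  have h2 : δ' * δ⁻¹ ∈ GammaInf Γ hT := (QuotientGroup.rightRel_apply).mp h
  obtain ⟨n, hn⟩ := Subgroup.mem_zpowers_iff.mp h2
  refine ⟨n, ?_⟩
  have hcoe : (T : SL(2,ℝ)) ^ n = (δ' : SL(2,ℝ)) * (δ : SL(2,ℝ))⁻¹ := by
    have := congrArg (fun x : Γ => (x : SL(2,ℝ))) hn
    simpa using this
  have hδ' : (δ' : SL(2,ℝ)) = T ^ n * (δ : SL(2,ℝ)) := by
    rw [hcoe]; group
  rw [hδ', mul_smul, T_zpow_smul']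

lemma im_eq_of_mk_eq' {δ δ' : Γ}
    (h : Quotient.mk (QuotientGroup.rightRel (GammaInf Γ hT)) δ =
      Quotient.mk (QuotientGroup.rightRel (GammaInf Γ hT)) δ') (z : ℍ) :
    (((δ' : SL(2,ℝ))) • z).im = (((δ : SL(2,ℝ))) • z).im := by
  obtain ⟨n, hn⟩ := smul_eq_vadd_of_mk_eq' Γ hT h z
  rw [hn, UpperHalfPlane.vadd_im]

lemma exists_good_rep' (z : ℍ) (q : Cosets Γ hT)
    (him : (((Quotient.out q : Γ) : SL(2,ℝ)) • z).im ≤ 1) :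
    ∃ δ : Γ, Quotient.mk (QuotientGroup.rightRel (GammaInf Γ hT)) δ = q ∧
      dist UpperHalfPlane.I ((δ : SL(2,ℝ)) • z) ≤
        1 + -Real.log ((((Quotient.out q : Γ) : SL(2,ℝ)) • z).im) := by
  set δ₀ : Γ := Quotient.out q with hδ₀
  set x : ℝ := (((δ₀ : SL(2,ℝ))) • z).re with hx
  set n : ℤ := -⌊x + 1/2⌋ with hn
  refine ⟨(⟨T, hT⟩ : Γ) ^ n * δ₀, ?_, ?_⟩
  · have h1 : Quotient.mk (QuotientGroup.rightRel (GammaInf Γ hT)) ((⟨T, hT⟩ : Γ) ^ n * δ₀) =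
        Quotient.mk (QuotientGroup.rightRel (GammaInf Γ hT)) δ₀ := by
      rw [Quotient.eq]
      rw [QuotientGroup.rightRel_apply]
      have h2 : δ₀ * ((⟨T, hT⟩ : Γ) ^ n * δ₀)⁻¹ = (⟨T, hT⟩ : Γ) ^ (-n) := by group
      rw [h2]
      exact zpow_mem (Subgroup.mem_zpowers _) _
    rw [h1, hδ₀, Quotient.out_eq]
  · have hcoe : (((⟨T, hT⟩ : Γ) ^ n * δ₀ : Γ) : SL(2,ℝ)) = T ^ n * (δ₀ : SL(2,ℝ)) := by
      push_cast
      rfl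
    have hw : (((((⟨T, hT⟩ : Γ) ^ n * δ₀ : Γ) : SL(2,ℝ))) • z)
        = (n : ℝ) +ᵥ ((δ₀ : SL(2,ℝ)) • z) := by
      rw [hcoe, mul_smul, T_zpow_smul']
    rw [hw]
    have hre : |((n : ℝ) +ᵥ ((δ₀ : SL(2,ℝ)) • z)).re| ≤ 1/2 := by
      rw [UpperHalfPlane.vadd_re, ← hx]
      have h1 := Int.floor_le (x + 1/2)
      have h2 := Int.lt_floor_add_one (x + 1/2)
      rw [abs_le]
      constructor <;> [skip; skip] <;> push_cast [hn] <;> linarith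
    have him' : ((n : ℝ) +ᵥ ((δ₀ : SL(2,ℝ)) • z)).im = (((δ₀ : SL(2,ℝ))) • z).im := by
      rw [UpperHalfPlane.vadd_im]
    have hfinal := dist_le_one_add_neg_log' ((n : ℝ) +ᵥ ((δ₀ : SL(2,ℝ)) • z)) hre
      (by rw [him']; exact him)
    rw [him'] at hfinal
    exact hfinal

/-- Proposition 2.2, part 3: under the counting bound `Π(z,t) ≤ U e^t`,
`s ∫₀^∞ e^{-st} Π(z,t) dt ≤ E(z,s) ≤ s ∫₀^∞ e^{-st} Π(z,t+1) dt`. -/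
theorem eisenstein_integral_bounds (s : ℝ) (hs : 1 < s) (z : ℍ) (hz : z.im < 1)
    (hzΓ : ∀ δ : Γ, ((δ : SL(2, ℝ)) • z).im ≤ 1)
    (U : ℝ) (hU : 0 < U)
    (hPi : ∀ t : ℝ, 0 ≤ t →
      (Aset Γ hT z t).Finite ∧ ((Aset Γ hT z t).ncard : ℝ) ≤ U * Real.exp t) :
    s * ∫ t in Set.Ioi (0 : ℝ), Real.exp (-s * t) * ((Aset Γ hT z t).ncard : ℝ) ≤
        Eis Γ hT z s ∧
      Eis Γ hT z s ≤
        s * ∫ t in Set.Ioi (0 : ℝ), Real.exp (-s * t) * ((Aset Γ hT z (t + 1)).ncard : ℝ) := by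
  classical
  have hs0 : (0:ℝ) < s := by linarith
  set rf : Cosets Γ hT → ℝ :=
    fun q => -Real.log ((((Quotient.out q : Γ) : SL(2,ℝ)) • z).im) with hrf
  have hy0 : ∀ q : Cosets Γ hT, 0 < (((Quotient.out q : Γ) : SL(2,ℝ)) • z).im :=
    fun q => UpperHalfPlane.im_pos _
  have hy1 : ∀ q : Cosets Γ hT, (((Quotient.out q : Γ) : SL(2,ℝ)) • z).im ≤ 1 :=
    fun q => hzΓ _
  have hr0 : ∀ q, 0 ≤ rf q := fun q => neg_nonneg.mpr (Real.log_nonpos (hy0 q).le (hy1 q))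
  -- Lemma A : A(z,t) ⊆ {rf ≤ t}
  have hA : ∀ t : ℝ, ∀ q, q ∈ Aset Γ hT z t → rf q ≤ t := by
    intro t q hq
    obtain ⟨δ, hδ, hd⟩ := hq
    have him : (((Quotient.out q : Γ) : SL(2,ℝ)) • z).im = ((δ : SL(2,ℝ)) • z).im := by
      have h : Quotient.mk (QuotientGroup.rightRel (GammaInf Γ hT)) δ =
          Quotient.mk (QuotientGroup.rightRel (GammaInf Γ hT)) (Quotient.out q) := by
        rw [hδ, Quotient.out_eq]
      exact im_eq_of_mk_eq' Γ hT h z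
    calc rf q = -Real.log ((δ : SL(2,ℝ)) • z).im := by simp only [hrf]; rw [him]
      _ ≤ dist UpperHalfPlane.I ((δ : SL(2,ℝ)) • z) := neg_log_le_dist' _
      _ ≤ t := hd
  -- Lemma B : {rf ≤ t} ⊆ A(z,t+1)
  have hB : ∀ t : ℝ, ∀ q, rf q ≤ t → q ∈ Aset Γ hT z (t+1) := by
    intro t q hrq
    obtain ⟨δ, hδ, hd⟩ := exists_good_rep' Γ hT z q (hy1 q)
    have hrq' : -Real.log ((((Quotient.out q : Γ) : SL(2,ℝ)) • z).im) ≤ t := hrq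
    exact ⟨δ, hδ, by linarith⟩
  -- finiteness / emptiness facts
  have hAneg : ∀ t : ℝ, t < 0 → Aset Γ hT z t = ∅ := by
    intro t ht
    ext q
    simp only [mem_empty_iff_false, iff_false]
    rintro ⟨δ, _, hd⟩
    exact absurd (dist_nonneg.trans hd) (by linarith)
  have hfinA : ∀ t : ℝ, (Aset Γ hT z t).Finite := by
    intro t
    rcases le_or_gt 0 t with ht | ht
    · exact (hPi t ht).1
    · rw [hAneg t ht]; exact finite_empty
  have hGfin : ∀ t : ℝ, {q : Cosets Γ hT | rf q ≤ t}.Finite := by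
    intro t
    rcases le_or_gt 0 t with ht | ht
    · exact ((hPi (t+1) (by linarith)).1).subset (fun q hq => hB t q hq)
    · have : {q : Cosets Γ hT | rf q ≤ t} = ∅ := by
        ext q
        simp only [mem_setOf_eq, mem_empty_iff_false, iff_false, not_le]
        exact lt_of_lt_of_le ht (hr0 q)
      rw [this]; exact finite_empty
  -- countability of the coset space
  haveI : Countable (Cosets Γ hT) := by
    rw [← Set.countable_univ_iff]
    have hcover : (univ : Set (Cosets Γ hT)) ⊆ ⋃ n : ℕ, Aset Γ hT z n := by
      intro q _
      refine mem_iUnion.mpr ⟨⌈rf q⌉₊ + 1, ?_⟩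
      have h1 : rf q ≤ (⌈rf q⌉₊ : ℝ) := Nat.le_ceil _
      have h2 := hB (⌈rf q⌉₊ : ℝ) q h1
      have h3 : ((⌈rf q⌉₊ + 1 : ℕ) : ℝ) = (⌈rf q⌉₊ : ℝ) + 1 := by push_cast; ring
      rw [h3]
      exact h2
    exact Set.Countable.mono hcover
      (Set.countable_iUnion fun n => (hfinA n).countable)
  -- key identity
  have hkey := key_identity' hs0 rf hr0 hGfin
  -- monotonicity of the counting functions
  have hAsub : ∀ a b : ℝ, a ≤ b → Aset Γ hT z a ⊆ Aset Γ hT z b := by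
    rintro a b hab q ⟨δ, h1, h2⟩
    exact ⟨δ, h1, h2.trans hab⟩
  have monoA : Monotone (fun t : ℝ => ((Aset Γ hT z t).ncard : ℝ)) := by
    intro a b hab
    simp only [Nat.cast_le]
    exact Set.ncard_le_ncard (hAsub a b hab) (hfinA b)
  have monoG : Monotone (fun t : ℝ => (({q : Cosets Γ hT | rf q ≤ t}).ncard : ℝ)) := by
    intro a b hab
    simp only [Nat.cast_le]
    exact Set.ncard_le_ncard (fun q hq => le_trans hq hab) (hGfin b)
  -- integrability helper
  have integHelp : ∀ g : ℝ → ℝ, Monotone g → (∀ t, 0 ≤ g t) →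
      (∀ t, 0 < t → g t ≤ (U * Real.exp 1) * Real.exp t) →
      IntegrableOn (fun t => Real.exp (-s*t) * g t) (Ioi (0:ℝ)) := by
    intro g hmono hg0 hbound
    have hmeas : Measurable (fun t => Real.exp (-s*t) * g t) :=
      ((Real.continuous_exp.comp (continuous_const.mul continuous_id)).measurable).mul
        hmono.measurable
    apply Integrable.mono'
      (g := fun t => (U * Real.exp 1) * Real.exp (-(s-1)*t))
    · exact (exp_neg_integrableOn_Ioi 0 (show (0:ℝ) < s - 1 by linarith)).const_mul _
    · exact hmeas.aestronglyMeasurable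
    · rw [ae_restrict_iff' measurableSet_Ioi]
      filter_upwards with t ht
      rw [Real.norm_eq_abs, abs_of_nonneg (mul_nonneg (Real.exp_pos _).le (hg0 t))]
      calc Real.exp (-s*t) * g t ≤ Real.exp (-s*t) * ((U * Real.exp 1) * Real.exp t) := by
            exact mul_le_mul_of_nonneg_left (hbound t ht) (Real.exp_pos _).le
        _ = (U * Real.exp 1) * Real.exp (-(s-1)*t) := by
            rw [show Real.exp (-s*t) * ((U * Real.exp 1) * Real.exp t)
              = (U * Real.exp 1) * (Real.exp (-s*t) * Real.exp t) from by ring,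
              ← Real.exp_add]
            congr 1
            ring
  have hbddA : ∀ t : ℝ, 0 < t → ((Aset Γ hT z t).ncard : ℝ) ≤ (U * Real.exp 1) * Real.exp t := by
    intro t ht
    calc ((Aset Γ hT z t).ncard : ℝ) ≤ U * Real.exp t := (hPi t ht.le).2
      _ ≤ (U * Real.exp 1) * Real.exp t := by
        have h1 : (1:ℝ) ≤ Real.exp 1 := Real.one_le_exp (by norm_num)
        have h2 : 0 ≤ (Real.exp 1 - 1) * (U * Real.exp t) :=
          mul_nonneg (by linarith) (mul_pos hU (Real.exp_pos t)).le
        nlinarith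
  have hbddG : ∀ t : ℝ, 0 < t →
      (({q : Cosets Γ hT | rf q ≤ t}).ncard : ℝ) ≤ (U * Real.exp 1) * Real.exp t := by
    intro t ht
    calc (({q : Cosets Γ hT | rf q ≤ t}).ncard : ℝ)
        ≤ ((Aset Γ hT z (t+1)).ncard : ℝ) := by
          simp only [Nat.cast_le]
          exact Set.ncard_le_ncard (fun q hq => hB t q hq) (hfinA (t+1))
      _ ≤ U * Real.exp (t+1) := (hPi (t+1) (by linarith)).2
      _ = (U * Real.exp 1) * Real.exp t := by rw [Real.exp_add]; ring
  have hbddA1 : ∀ t : ℝ, 0 < t →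
      ((Aset Γ hT z (t+1)).ncard : ℝ) ≤ (U * Real.exp 1) * Real.exp t := by
    intro t ht
    calc ((Aset Γ hT z (t+1)).ncard : ℝ) ≤ U * Real.exp (t+1) := (hPi (t+1) (by linarith)).2
      _ = (U * Real.exp 1) * Real.exp t := by rw [Real.exp_add]; ring
  have integA : IntegrableOn (fun t => Real.exp (-s*t) * ((Aset Γ hT z t).ncard : ℝ))
      (Ioi (0:ℝ)) :=
    integHelp _ monoA (fun t => Nat.cast_nonneg _) hbddA
  have integG : IntegrableOn
      (fun t => Real.exp (-s*t) * (({q : Cosets Γ hT | rf q ≤ t}).ncard : ℝ)) (Ioi (0:ℝ)) :=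
    integHelp _ monoG (fun t => Nat.cast_nonneg _) hbddG
  have integA1 : IntegrableOn (fun t => Real.exp (-s*t) * ((Aset Γ hT z (t+1)).ncard : ℝ))
      (Ioi (0:ℝ)) :=
    integHelp _ (fun a b hab => monoA (by linarith : a + 1 ≤ b + 1))
      (fun t => Nat.cast_nonneg _) hbddA1
  -- the real integral against G equals Φ.toReal
  set Φ : ℝ≥0∞ := ∫⁻ t in Ioi (0:ℝ),
      ENNReal.ofReal (Real.exp (-s*t)) * (({q : Cosets Γ hT | rf q ≤ t}).ncard : ℝ≥0∞) with hΦ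
  have hIG : ∫ t in Ioi (0:ℝ), Real.exp (-s*t) * (({q : Cosets Γ hT | rf q ≤ t}).ncard : ℝ)
      = Φ.toReal := by
    rw [integral_eq_lintegral_of_nonneg_ae]
    · congr 1
      rw [hΦ]
      apply lintegral_congr
      intro t
      rw [ENNReal.ofReal_mul (Real.exp_pos _).le, ENNReal.ofReal_natCast]
    · filter_upwards with t
      exact mul_nonneg (Real.exp_pos _).le (Nat.cast_nonneg _)
    · exact integG.aestronglyMeasurable
  -- summability of the Eisenstein series terms
  have hΦfin : Φ ≠ ⊤ := by
    have hle : Φ ≤ ∫⁻ t in Ioi (0:ℝ),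
        ENNReal.ofReal (Real.exp (-s*t) * ((U * Real.exp 1) * Real.exp t)) := by
      rw [hΦ]
      apply lintegral_mono_ae
      rw [ae_restrict_iff' measurableSet_Ioi]
      filter_upwards with t ht
      rw [ENNReal.ofReal_mul (Real.exp_pos _).le, ← ENNReal.ofReal_natCast
        ((({q : Cosets Γ hT | rf q ≤ t}).ncard))]
      exact mul_le_mul_right (ENNReal.ofReal_le_ofReal (hbddG t ht)) _
    refine (lt_of_le_of_lt hle ?_).ne
    have hint : IntegrableOn (fun t => Real.exp (-s*t) * ((U * Real.exp 1) * Real.exp t))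
        (Ioi (0:ℝ)) := by
      have heq : (fun t => Real.exp (-s*t) * ((U * Real.exp 1) * Real.exp t))
          = (fun t => (U * Real.exp 1) * Real.exp (-(s-1)*t)) := by
        funext t
        rw [show Real.exp (-s*t) * ((U * Real.exp 1) * Real.exp t)
          = (U * Real.exp 1) * (Real.exp (-s*t) * Real.exp t) from by ring,
          ← Real.exp_add]
        congr 1
        ring
      rw [heq]
      exact (exp_neg_integrableOn_Ioi 0 (show (0:ℝ) < s - 1 by linarith)).const_mul _
    rw [← hasFiniteIntegral_iff_ofReal]
    · exact hint.hasFiniteIntegral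
    · filter_upwards with t
      positivity
  have hSFfin : (∑' q : Cosets Γ hT, ENNReal.ofReal (Real.exp (-s * rf q))) ≠ ⊤ := by
    rw [← hkey]
    exact ENNReal.mul_ne_top ENNReal.ofReal_ne_top hΦfin
  have hsum : Summable (fun q : Cosets Γ hT => Real.exp (-s * rf q)) := by
    have h1 : Summable (fun q : Cosets Γ hT => (Real.exp (-s * rf q)).toNNReal) :=
      ENNReal.tsum_coe_ne_top_iff_summable.mp (by exact hSFfin)
    have h2 := NNReal.summable_coe.mpr h1
    apply Summable.congr h2
    intro q
    exact Real.coe_toNNReal _ (Real.exp_pos _).le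
  -- Eis in terms of rf
  have hEis : Eis Γ hT z s = ∑' q : Cosets Γ hT, Real.exp (-s * rf q) := by
    unfold Eis eisTerm
    apply tsum_congr
    intro q
    rw [Real.rpow_def_of_pos (hy0 q), hrf]
    congr 1
    ring
  -- convert key identity to the real world
  have hofReal : ENNReal.ofReal (Eis Γ hT z s)
      = ∑' q : Cosets Γ hT, ENNReal.ofReal (Real.exp (-s * rf q)) := by
    rw [hEis]
    exact ENNReal.ofReal_tsum_of_nonneg (fun q => (Real.exp_pos _).le) hsum
  have hmain : Eis Γ hT z s
      = s * ∫ t in Ioi (0:ℝ), Real.exp (-s*t) * (({q : Cosets Γ hT | rf q ≤ t}).ncard : ℝ) := by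
    have h1 : ENNReal.ofReal s * Φ = ENNReal.ofReal (Eis Γ hT z s) := by
      rw [hofReal, ← hkey, hΦ]
    have h2 := congrArg ENNReal.toReal h1
    rw [ENNReal.toReal_mul, ENNReal.toReal_ofReal hs0.le, ENNReal.toReal_ofReal] at h2
    · rw [hIG, h2]
    · rw [hEis]
      exact tsum_nonneg fun q => (Real.exp_pos _).le
  constructor
  · -- lower bound
    rw [hmain]
    apply mul_le_mul_of_nonneg_left _ hs0.le
    apply setIntegral_mono_on integA integG measurableSet_Ioi
    intro t ht
    apply mul_le_mul_of_nonneg_left _ (Real.exp_pos _).le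
    simp only [Nat.cast_le]
    exact Set.ncard_le_ncard (fun q hq => hA t q hq) (hGfin t)
  · -- upper bound
    rw [hmain]
    apply mul_le_mul_of_nonneg_left _ hs0.le
    apply setIntegral_mono_on integG integA1 measurableSet_Ioi
    intro t ht
    apply mul_le_mul_of_nonneg_left _ (Real.exp_pos _).le
    simp only [Nat.cast_le]
    exact Set.ncard_le_ncard (fun q hq => hB t q hq) (hfinA (t+1))
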